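/- Let r, q₂, q₁, q₀ be real numbers and e₁, e₂, e₃, U, u_r real numbers satisfying: e₁(q₂²−1) = r(q₂²−1) + 2q₂q₁; e₂(q₂²−1) = r e₁(q₂²−1) + 2q₂q₀ + q₁² + 2t; e₃(q₂²−1) = r e₂(q₂²−1) + 2q₁q₀ + 2 + 2q₂; 0 = r e₃(q₂²−1) + q₀² + 2U − 2e₁q₂ + 4q₁; and u_r = U + (r − e₁)q₂ + 2q₁. Then (r²q₂ + r q₁ + q₀)² − r⁴ + 2 t r² + 2 r + 2 u_r = 0. -/
import Mathlib


/-- The telescopic identity (3.8)/(3.10) of the κ=3 analysis: the combination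
`r³·(3.1) + r²·(3.2) + r·(3.3) + (3.4)` of the four first-integral relations
yields `(r²q₂ + rq₁ + q₀)² - r⁴ + 2tr² + 2r + 2u_r = 0`. -/
theorem stmt_9 (t r q₂ q₁ q₀ e₁ e₂ e₃ U ur : ℝ)
    (h1 : e₁ * (q₂ ^ 2 - 1) = r * (q₂ ^ 2 - 1) + 2 * q₂ * q₁)
    (h2 : e₂ * (q₂ ^ 2 - 1) = r * e₁ * (q₂ ^ 2 - 1) + 2 * q₂ * q₀ + q₁ ^ 2 + 2 * t)
    (h3 : e₃ * (q₂ ^ 2 - 1) = r * e₂ * (q₂ ^ 2 - 1) + 2 * q₁ * q₀ + 2 + 2 * q₂)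
    (h4 : 0 = r * e₃ * (q₂ ^ 2 - 1) + q₀ ^ 2 + 2 * U - 2 * e₁ * q₂ + 4 * q₁)
    (h5 : ur = U + (r - e₁) * q₂ + 2 * q₁) :
    (r ^ 2 * q₂ + r * q₁ + q₀) ^ 2 - r ^ 4 + 2 * t * r ^ 2 + 2 * r + 2 * ur = 0 := by
  linear_combination (-r^3)*h1 - (r^2)*h2 - r*h3 - h4 + 2*h5
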